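/- Let n ≥ 1, let Ω ⊆ ℂⁿ be an open subset, and let (g_m)_{m∈ℕ} be a sequence of maps ℂⁿ → ℂⁿ, each holomorphic on Ω, converging locally uniformly on Ω to the identity map. Then for every compact convex subset K ⊆ Ω there exists m₀ such that for all m ≥ m₀ the real-valued function z ↦ ‖g_m(z)‖² is convex on K. -/

import Mathlib

open Filter Topology

open Metric

noncomputable section

lemma aux_cauchy {E : Type*} [NormedAddCommGroup E] [NormedSpace ℂ E]
    {f : ℂ → E} {U : Set ℂ} (hf : DifferentiableOn ℂ f U)
    {c : ℂ} {R C : ℝ} (hR : 0 < R) (hball : closedBall c R ⊆ U)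
    (hC : ∀ z ∈ closedBall c R, ‖f z‖ ≤ C) : ‖deriv f c‖ ≤ C / R := by
  apply Complex.norm_deriv_le_of_forall_mem_sphere_norm_le hR
  · exact DifferentiableOn.diffContOnCl (by
      rw [closure_ball c hR.ne']; exact hf.mono hball)
  · exact fun z hz => hC z (sphere_subset_closedBall hz)

lemma aux_comp_ofReal {E : Type*} [NormedAddCommGroup E] [NormedSpace ℂ E]
    {f : ℂ → E} {f' : E} {t : ℝ} (hf : HasDerivAt f f' t) :
    HasDerivAt (fun s : ℝ => f s) f' t := by
  simpa [Function.comp_def] using hf.scomp t Complex.ofRealCLM.hasDerivAt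

lemma aux_re {χ : ℝ → ℂ} {c : ℂ} {t : ℝ} (h : HasDerivAt χ c t) :
    HasDerivAt (fun s => RCLike.re (χ s)) (RCLike.re c) t := by
  simpa [Function.comp_def] using ((RCLike.reCLM (K := ℂ)).hasFDerivAt.comp_hasDerivAt t h)

set_option maxHeartbeats 2000000

/-- If holomorphic maps `g m` converge locally uniformly on an open set `Ω ⊆ ℂⁿ` to the
identity, then for every compact convex `K ⊆ Ω` the functions `z ↦ ‖g m z‖²` are
eventually convex on `K`. -/
theorem stmt9 (n : ℕ) (hn : 1 ≤ n)
    (Ω : Set (EuclideanSpace ℂ (Fin n))) (hΩopen : IsOpen Ω)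
    (g : ℕ → EuclideanSpace ℂ (Fin n) → EuclideanSpace ℂ (Fin n))
    (hg : ∀ m, DifferentiableOn ℂ (g m) Ω)
    (hconv : TendstoLocallyUniformlyOn (fun m => g m) id atTop Ω)
    (K : Set (EuclideanSpace ℂ (Fin n))) (hKcpt : IsCompact K) (hKconv : Convex ℝ K)
    (hKΩ : K ⊆ Ω) :
    ∃ m₀ : ℕ, ∀ m ≥ m₀, ConvexOn ℝ K (fun z => ‖g m z‖ ^ 2) := by
  classical
  obtain ⟨r, hr0, hrΩ⟩ := hKcpt.exists_cthickening_subset_open hΩopen hKΩ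
  set T : Set (EuclideanSpace ℂ (Fin n)) := Metric.cthickening r K with hTdef
  have hTcpt : IsCompact T := hKcpt.cthickening
  obtain ⟨C₀, hC₀⟩ := hKcpt.isBounded.exists_norm_le
  set C : ℝ := max C₀ 0 with hCdef
  have hC : ∀ z ∈ K, ‖z‖ ≤ C := fun z hz => (hC₀ z hz).trans (le_max_left _ _)
  have hC0 : 0 ≤ C := le_max_right _ _
  set ε : ℝ := min (r/4) (r^2/(16*(C+r))) with hεdef
  have hε : 0 < ε := lt_min (by linarith) (by positivity)
  have hε1 : ε ≤ r/4 := min_le_left _ _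
  have hε2 : ε * (16*(C+r)) ≤ r^2 :=
    (le_div_iff₀ (by positivity)).mp (min_le_right (r/4) _)
  have hTU : TendstoUniformlyOn (fun m => g m) id atTop T :=
    (tendstoLocallyUniformlyOn_iff_forall_isCompact hΩopen).mp hconv T hrΩ hTcpt
  rw [Metric.tendstoUniformlyOn_iff] at hTU
  obtain ⟨m₀, hm₀⟩ := eventually_atTop.mp (hTU ε hε)
  refine ⟨m₀, fun m hm => ?_⟩
  have hgm : ∀ z ∈ T, ‖g m z - z‖ ≤ ε := by
    intro z hz
    have := hm₀ m hm z hz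
    rw [id_eq, dist_eq_norm, norm_sub_rev] at this
    exact this.le
  refine ⟨hKconv, ?_⟩
  intro x hx y hy a b ha hb hab
  by_cases hxy : y = x
  · rw [hxy, Convex.combo_self hab x]
    simp only [smul_eq_mul]
    nlinarith [sq_nonneg ‖g m x‖]
  · set v : EuclideanSpace ℂ (Fin n) := y - x with hvdef
    have hv : v ≠ 0 := sub_ne_zero.mpr hxy
    have hvn : 0 < ‖v‖ := norm_pos_iff.mpr hv
    set ρ : ℝ := r / ‖v‖ with hρdef
    have hρ : 0 < ρ := div_pos hr0 hvn
    set L : ℂ → EuclideanSpace ℂ (Fin n) := fun w => x + w • v with hLdef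
    have hcoesmul : ∀ (t : ℝ), ((t : ℂ)) • v = t • v := fun t => by
      rw [show ((t:ℂ)) = t • (1:ℂ) by simp [Complex.real_smul], smul_assoc, one_smul]
    have hseg : ∀ t ∈ Set.Icc (0:ℝ) 1, x + t • v ∈ K := by
      intro t ht
      have h2 := hKconv hx hy (by linarith [ht.2] : (0:ℝ) ≤ 1 - t) ht.1 (by ring)
      convert h2 using 1
      rw [hvdef]; module
    have hstrip : ∀ t ∈ Set.Icc (0:ℝ) 1, ∀ w ∈ closedBall ((t:ℂ)) ρ, L w ∈ T := by
      intro t ht w hw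
      apply mem_cthickening_of_dist_le (L w) (x + t • v) r K (hseg t ht)
      have h3 : L w - (x + t • v) = (w - t) • v := by
        rw [hLdef]; simp only [← hcoesmul]; module
      rw [dist_eq_norm, h3, norm_smul]
      calc ‖w - (t:ℂ)‖ * ‖v‖ ≤ ρ * ‖v‖ :=
            mul_le_mul_of_nonneg_right (mem_closedBall_iff_norm.mp hw) (norm_nonneg v)
        _ = r := by rw [hρdef]; field_simp
    set U : Set ℂ := L ⁻¹' Ω with hUdef
    have hLdiff : Differentiable ℂ L := (differentiable_id.smul_const v).const_add x
    have hUopen : IsOpen U := hΩopen.preimage hLdiff.continuous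
    set F : ℂ → EuclideanSpace ℂ (Fin n) := fun w => g m (L w) with hFdef
    have hFd : DifferentiableOn ℂ F U := (hg m).comp hLdiff.differentiableOn (fun w hw => hw)
    have hF'd : DifferentiableOn ℂ (deriv F) U :=
      ((hFd.analyticOnNhd hUopen).deriv).differentiableOn
    set ψ : ℂ → EuclideanSpace ℂ (Fin n) := fun w => F w - L w with hψdef
    have hψd : DifferentiableOn ℂ ψ U := hFd.sub hLdiff.differentiableOn
    have hψb : ∀ w, L w ∈ T → ‖ψ w‖ ≤ ε := fun w hw => hgm (L w) hw
    have hballU : ∀ t ∈ Set.Icc (0:ℝ) 1, closedBall ((t:ℂ)) ρ ⊆ U :=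
      fun t ht w hw => hrΩ (hstrip t ht w hw)
    have hEst1 : ∀ t ∈ Set.Icc (0:ℝ) 1, ∀ z ∈ closedBall ((t:ℂ)) (ρ/2),
        ‖deriv ψ z‖ ≤ ε / (ρ/2) := by
      intro t ht z hz
      have hsub : closedBall z (ρ/2) ⊆ closedBall ((t:ℂ)) ρ := by
        intro w hw
        have h1 := mem_closedBall.mp hw
        have h2 := mem_closedBall.mp hz
        have h3 := dist_triangle w z ((t:ℂ))
        exact mem_closedBall.mpr (by linarith)
      exact aux_cauchy hψd (by linarith) (hsub.trans (hballU t ht))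
        (fun w hw => hψb w (hstrip t ht w (hsub hw)))
    have hEst2 : ∀ t ∈ Set.Icc (0:ℝ) 1,
        ‖deriv (deriv ψ) ((t:ℂ))‖ ≤ (ε / (ρ/2)) / (ρ/2) := by
      intro t ht
      have hsub : closedBall ((t:ℂ)) (ρ/2) ⊆ closedBall ((t:ℂ)) ρ :=
        closedBall_subset_closedBall (by linarith)
      exact aux_cauchy ((hψd.analyticOnNhd hUopen).deriv).differentiableOn (by linarith)
        (hsub.trans (hballU t ht)) (fun z hz => hEst1 t ht z hz)
    have hLder : ∀ w : ℂ, HasDerivAt L v w := fun w => by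
      have h := ((hasDerivAt_id w).smul_const v).const_add x
      rw [one_smul] at h; exact h
    have hFder : ∀ w ∈ U, HasDerivAt F (deriv F w) w := fun w hw =>
      (hFd.differentiableAt (hUopen.mem_nhds hw)).hasDerivAt
    have hψder : ∀ w ∈ U, deriv ψ w = deriv F w - v := fun w hw =>
      ((hFder w hw).sub (hLder w)).deriv
    have hψder2 : ∀ w ∈ U, deriv (deriv ψ) w = deriv (deriv F) w := by
      intro w hw
      have hev : deriv ψ =ᶠ[nhds w] fun z => deriv F z - v :=
        Filter.eventuallyEq_of_mem (hUopen.mem_nhds hw) (fun z hz => hψder z hz)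
      rw [hev.deriv_eq, deriv_sub_const]
    have hmemU : ∀ t ∈ Set.Icc (0:ℝ) 1, ((t:ℂ)) ∈ U := fun t ht =>
      hballU t ht (mem_closedBall_self hρ.le)
    -- real one-variable functions
    have hφder : ∀ t ∈ Set.Icc (0:ℝ) 1,
        HasDerivAt (fun s : ℝ => ‖F ((s:ℂ))‖^2)
          (2 * RCLike.re (inner (𝕜 := ℂ) (F ((t:ℂ))) (deriv F ((t:ℂ))))) t := by
      intro t ht
      have h1 : HasDerivAt (fun s : ℝ => F ((s:ℂ))) (deriv F ((t:ℂ))) t :=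
        aux_comp_ofReal (hFder _ (hmemU t ht))
      have h3 := aux_re (h1.inner ℂ h1)
      have hfun : (fun s : ℝ => ‖F ((s:ℂ))‖^2)
          = fun s : ℝ => RCLike.re (inner (𝕜 := ℂ) (F ((s:ℂ))) (F ((s:ℂ)))) :=
        funext fun s => (inner_self_eq_norm_sq _).symm
      rw [hfun]
      convert h3 using 1
      have hc : (inner (𝕜 := ℂ) (deriv F ((t:ℂ))) (F ((t:ℂ))))
          = starRingEnd ℂ (inner (𝕜 := ℂ) (F ((t:ℂ))) (deriv F ((t:ℂ)))) :=
        (inner_conj_symm _ _).symm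
      rw [hc, map_add, RCLike.conj_re]
      ring
    have hD1der : ∀ t ∈ Set.Icc (0:ℝ) 1,
        HasDerivAt (fun s : ℝ => 2 * RCLike.re (inner (𝕜 := ℂ) (F ((s:ℂ))) (deriv F ((s:ℂ)))))
          (2 * (‖deriv F ((t:ℂ))‖^2
            + RCLike.re (inner (𝕜 := ℂ) (F ((t:ℂ))) (deriv (deriv F) ((t:ℂ)))))) t := by
      intro t ht
      have h1 : HasDerivAt (fun s : ℝ => F ((s:ℂ))) (deriv F ((t:ℂ))) t :=
        aux_comp_ofReal (hFder _ (hmemU t ht))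
      have h1' : HasDerivAt (fun s : ℝ => deriv F ((s:ℂ))) (deriv (deriv F) ((t:ℂ))) t :=
        aux_comp_ofReal (hF'd.differentiableAt (hUopen.mem_nhds (hmemU t ht))).hasDerivAt
      have h3 := (aux_re (h1.inner ℂ h1')).const_mul 2
      refine h3.congr_deriv ?_
      rw [map_add, inner_self_eq_norm_sq]
      ring
    -- positivity of the second derivative on (0,1)
    have hD2pos : ∀ t ∈ Set.Ioo (0:ℝ) 1,
        0 ≤ 2 * (‖deriv F ((t:ℂ))‖^2
          + RCLike.re (inner (𝕜 := ℂ) (F ((t:ℂ))) (deriv (deriv F) ((t:ℂ))))) := by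
      intro t ht
      have htI : t ∈ Set.Icc (0:ℝ) 1 := Set.mem_Icc_of_Ioo ht
      have htU := hmemU t htI
      have hq1 : ε / (ρ/2) = 2*ε*‖v‖/r := by
        rw [hρdef]; field_simp
      have hq2 : (ε / (ρ/2)) / (ρ/2) = 4*ε*‖v‖^2/r^2 := by
        rw [hρdef]; field_simp; ring
      have e1 : ‖deriv ψ ((t:ℂ))‖ ≤ 2*ε*‖v‖/r := by
        rw [← hq1]; exact hEst1 t htI _ (mem_closedBall_self (by linarith))
      have e2 : ‖deriv (deriv F) ((t:ℂ))‖ ≤ 4*ε*‖v‖^2/r^2 := by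
        rw [← hq2, ← hψder2 _ htU]; exact hEst2 t htI
      have hFt : ‖F ((t:ℂ))‖ ≤ C + ε := by
        have h4 : F ((t:ℂ)) = ψ ((t:ℂ)) + L ((t:ℂ)) := by simp only [hψdef]; abel
        have h5 : ‖L ((t:ℂ))‖ ≤ C := by
          have hLt : L ((t:ℂ)) = x + t • v := by rw [hLdef]; simp only [hcoesmul]
          rw [hLt]; exact hC _ (hseg t htI)
        have h6 : ‖ψ ((t:ℂ))‖ ≤ ε :=
          hψb _ (hstrip t htI _ (mem_closedBall_self hρ.le))
        calc ‖F ((t:ℂ))‖ ≤ ‖ψ ((t:ℂ))‖ + ‖L ((t:ℂ))‖ := by rw [h4]; exact norm_add_le _ _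
          _ ≤ C + ε := by linarith
      have hF'low : ‖v‖ - 2*ε*‖v‖/r ≤ ‖deriv F ((t:ℂ))‖ := by
        have h4 : v = deriv F ((t:ℂ)) - deriv ψ ((t:ℂ)) := by rw [hψder _ htU]; abel
        have h5 : ‖v‖ ≤ ‖deriv F ((t:ℂ))‖ + ‖deriv ψ ((t:ℂ))‖ := by
          rw [h4]; exact norm_sub_le _ _
        linarith
      have hip : -((C+ε) * (4*ε*‖v‖^2/r^2)) ≤
          RCLike.re (inner (𝕜 := ℂ) (F ((t:ℂ))) (deriv (deriv F) ((t:ℂ)))) := by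
        have h4 := RCLike.abs_re_le_norm
          (inner (𝕜 := ℂ) (F ((t:ℂ))) (deriv (deriv F) ((t:ℂ))))
        have h5 := norm_inner_le_norm (𝕜 := ℂ) (F ((t:ℂ))) (deriv (deriv F) ((t:ℂ)))
        have h6 : ‖F ((t:ℂ))‖ * ‖deriv (deriv F) ((t:ℂ))‖ ≤ (C+ε) * (4*ε*‖v‖^2/r^2) :=
          mul_le_mul hFt e2 (norm_nonneg _) (by linarith)
        have h7 := neg_abs_le
          (RCLike.re (inner (𝕜 := ℂ) (F ((t:ℂ))) (deriv (deriv F) ((t:ℂ)))))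
        linarith
      have hbase : ‖v‖/2 ≤ ‖v‖ - 2*ε*‖v‖/r := by
        have h8 : 2*ε*‖v‖/r ≤ ‖v‖/2 := by
          rw [div_le_iff₀ hr0]
          nlinarith [mul_nonneg hvn.le (by linarith : (0:ℝ) ≤ r - 4*ε)]
        linarith
      have hsq : (‖v‖ - 2*ε*‖v‖/r)^2 ≤ ‖deriv F ((t:ℂ))‖^2 :=
        pow_le_pow_left₀ (by linarith) hF'low 2
      have hlb : ‖v‖^2/4 ≤ (‖v‖ - 2*ε*‖v‖/r)^2 := by
        have h9 : (‖v‖/2)*(‖v‖/2) ≤ (‖v‖ - 2*ε*‖v‖/r)*(‖v‖ - 2*ε*‖v‖/r) :=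
          mul_le_mul hbase hbase (by linarith) (by linarith)
        nlinarith [h9]
      have hrhs : (C+ε) * (4*ε*‖v‖^2/r^2) ≤ ‖v‖^2/4 := by
        have h10 : (C+ε) ≤ C+r := by linarith
        have h11 : (0:ℝ) ≤ 4*ε*‖v‖^2/r^2 := by positivity
        have h12 := mul_le_mul_of_nonneg_left hε2 (sq_nonneg ‖v‖)
        calc (C+ε) * (4*ε*‖v‖^2/r^2) ≤ (C+r) * (4*ε*‖v‖^2/r^2) :=
              mul_le_mul_of_nonneg_right h10 h11
          _ ≤ ‖v‖^2/4 := by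
              rw [← mul_div_assoc, div_le_div_iff₀ (by positivity) (by norm_num : (0:ℝ) < 4)]
              nlinarith [h12]
      linarith [hsq, hip, hlb, hrhs]
    -- convexity of φ on [0,1]
    have hφconv : ConvexOn ℝ (Set.Icc (0:ℝ) 1) (fun s : ℝ => ‖F ((s:ℂ))‖^2) := by
      refine convexOn_of_hasDerivWithinAt2_nonneg (convex_Icc 0 1)
        (f' := fun t : ℝ => 2 * RCLike.re (inner (𝕜 := ℂ) (F ((t:ℂ))) (deriv F ((t:ℂ)))))
        (f'' := fun t : ℝ => 2 * (‖deriv F ((t:ℂ))‖^2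
          + RCLike.re (inner (𝕜 := ℂ) (F ((t:ℂ))) (deriv (deriv F) ((t:ℂ))))))
        (fun t ht => (hφder t ht).continuousAt.continuousWithinAt)
        (fun t ht => ?_) (fun t ht => ?_) (fun t ht => ?_)
      · rw [interior_Icc] at ht
        exact (hφder t (Set.mem_Icc_of_Ioo ht)).hasDerivWithinAt
      · rw [interior_Icc] at ht
        exact (hD1der t (Set.mem_Icc_of_Ioo ht)).hasDerivWithinAt
      · rw [interior_Icc] at ht
        exact hD2pos t ht
    -- conclude
    have h01 : (0:ℝ) ∈ Set.Icc (0:ℝ) 1 := Set.left_mem_Icc.mpr zero_le_one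
    have h11 : (1:ℝ) ∈ Set.Icc (0:ℝ) 1 := Set.right_mem_Icc.mpr zero_le_one
    have hmain := hφconv.2 h01 h11 ha hb hab
    simp only [smul_eq_mul, mul_zero, mul_one, zero_add] at hmain
    have e0 : ‖F ((0:ℝ):ℂ)‖^2 = ‖g m x‖^2 := by
      have : L (((0:ℝ):ℂ)) = x := by simp [hLdef]
      simp only [hFdef, this]
    have e1 : ‖F ((1:ℝ):ℂ)‖^2 = ‖g m y‖^2 := by
      have : L (((1:ℝ):ℂ)) = y := by
        simp only [hLdef, Complex.ofReal_one, one_smul, hvdef]; abel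
      simp only [hFdef, this]
    have eb : a • x + b • y = L ((b:ℂ)) := by
      have haab : a = 1 - b := by linarith
      simp only [hLdef, hcoesmul, hvdef, haab]
      module
    calc (fun z => ‖g m z‖^2) (a • x + b • y) = ‖F ((b:ℝ):ℂ)‖^2 := by rw [eb]
      _ ≤ a * ‖F ((0:ℝ):ℂ)‖^2 + b * ‖F ((1:ℝ):ℂ)‖^2 := hmain
      _ = a • ‖g m x‖^2 + b • ‖g m y‖^2 := by rw [e0, e1]; simp [smul_eq_mul]
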